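/- For a closed subset A of a compact metrizable space X with A = f⁻¹(0) for some continuous f : X → ℝ, one has S_I(A) = ⋂_{n≥1} S_I(f⁻¹((-1/n, 1/n))); hence S_I(A) is a Gδ-set in I(X). -/

import Mathlib

open scoped BigOperators

/-- An idempotent probability measure: normality on constants, max-plus homogeneity
(addition of constants), and max-additivity (pointwise max ↦ max). -/
def IsIdemProb {X : Type*} [TopologicalSpace X] (μ : C(X, ℝ) → ℝ) : Prop :=
  (∀ c : ℝ, μ (ContinuousMap.const X c) = c) ∧
  (∀ (c : ℝ) (φ : C(X, ℝ)), μ (ContinuousMap.const X c + φ) = c + μ φ) ∧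
  (∀ φ ψ : C(X, ℝ), μ (φ ⊔ ψ) = max (μ φ) (μ ψ))

/-- The support of a functional μ : the intersection of all closed sets F such that
μ φ depends only on φ|_F. -/
def suppI {X : Type*} [TopologicalSpace X] (μ : C(X, ℝ) → ℝ) : Set X :=
  ⋂₀ {F : Set X | IsClosed F ∧ ∀ φ ψ : C(X, ℝ), (∀ x ∈ F, φ x = ψ x) → μ φ = μ ψ}

/-- The space I(X) of idempotent probability measures with the topology of
pointwise convergence. -/
abbrev IPM (X : Type*) [TopologicalSpace X] : Type _ :=
  {μ : C(X, ℝ) → ℝ // IsIdemProb μ}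

/-- S_I(A) = {μ ∈ I(X) : supp μ ∩ A ≠ ∅}. -/
def SI {X : Type*} [TopologicalSpace X] (A : Set X) : Set (IPM X) :=
  {μ | (suppI μ.1 ∩ A).Nonempty}

section Aux

variable {X : Type*} [TopologicalSpace X] {μ : C(X, ℝ) → ℝ}

/-- `F` is a determining set for `μ`. -/
def Det (μ : C(X, ℝ) → ℝ) (F : Set X) : Prop :=
  ∀ φ ψ : C(X, ℝ), (∀ x ∈ F, φ x = ψ x) → μ φ = μ ψ

theorem IsIdemProb.mono (hμ : IsIdemProb μ) {φ ψ : C(X, ℝ)} (h : φ ≤ ψ) : μ φ ≤ μ ψ := by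
  have : φ ⊔ ψ = ψ := sup_eq_right.mpr h
  have h2 := hμ.2.2 φ ψ
  rw [this] at h2
  rw [h2]
  exact le_max_left _ _

theorem le_add_of_det (hμ : IsIdemProb μ) {F : Set X} (hF : Det μ F) {φ ψ : C(X, ℝ)}
    {ε : ℝ} (hε : 0 ≤ ε) (h : ∀ x ∈ F, φ x ≤ ψ x + ε) : μ φ ≤ μ ψ + ε := by
  have hsup : ∀ x ∈ F, (φ ⊔ (ContinuousMap.const X ε + ψ)) x =
      (ContinuousMap.const X ε + ψ) x := by
    intro x hx
    simp only [ContinuousMap.sup_apply, ContinuousMap.add_apply, ContinuousMap.const_apply]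
    have := h x hx
    simp [max_eq_right]; linarith
  have h1 : μ (φ ⊔ (ContinuousMap.const X ε + ψ)) = μ (ContinuousMap.const X ε + ψ) :=
    hF _ _ hsup
  have h2 : μ φ ≤ μ (φ ⊔ (ContinuousMap.const X ε + ψ)) := hμ.mono le_sup_left
  rw [h1, hμ.2.1] at h2
  linarith

theorem det_inter [NormalSpace X] [CompactSpace X] (hμ : IsIdemProb μ) {F G : Set X}
    (hFc : IsClosed F) (hGc : IsClosed G) (hF : Det μ F) (hG : Det μ G) :
    Det μ (F ∩ G) := by
  -- it suffices to prove one inequality up to ε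
  have key : ∀ φ ψ : C(X, ℝ), (∀ x ∈ F ∩ G, φ x = ψ x) → ∀ ε : ℝ, 0 < ε →
      μ φ ≤ μ ψ + ε := by
    intro φ ψ hφψ ε hε
    set W : Set X := {x | φ x < ψ x + ε} with hW
    have hWo : IsOpen W := isOpen_lt (map_continuous φ) (by continuity)
    have hdisj : Disjoint (F ∩ Wᶜ) G := by
      rw [Set.disjoint_left]
      rintro x ⟨hxF, hxW⟩ hxG
      exact hxW (by simpa [hW] using (hφψ x ⟨hxF, hxG⟩).le.trans_lt (by linarith))
    obtain ⟨u, hu0, hu1, hu01⟩ :=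
      exists_continuous_zero_one_of_isClosed hGc (hFc.inter hWo.isClosed_compl) hdisj.symm
    set c : ℝ := ‖φ‖ + ‖ψ‖ with hc
    have hc0 : 0 ≤ c := by positivity
    set φ' : C(X, ℝ) := φ - (c : ℝ) • u with hφ'
    have hφ'G : ∀ x ∈ G, φ' x = φ x := by
      intro x hx
      simp [hφ', hu0 hx]
    have hμφ' : μ φ' = μ φ := hG _ _ hφ'G
    have hφ'F : ∀ x ∈ F, φ' x ≤ ψ x + ε := by
      intro x hx
      by_cases hxW : x ∈ W
      · have h1 : 0 ≤ u x := (hu01 x).1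
        have : φ' x ≤ φ x := by
          simp only [hφ', ContinuousMap.sub_apply, ContinuousMap.smul_apply, smul_eq_mul]
          nlinarith
        exact this.trans (le_of_lt hxW)
      · have h1 : u x = 1 := hu1 ⟨hx, hxW⟩
        have h2 : φ x - c ≤ ψ x := by
          have hφb : φ x ≤ ‖φ‖ := by
            have := φ.norm_coe_le_norm x
            exact (le_abs_self _).trans (by simpa using this)
          have hψb : -‖ψ‖ ≤ ψ x := by
            have := ψ.norm_coe_le_norm x
            have := abs_le.mp (by simpa using this)
            linarith [this.1]
          simp [hc]; linarith
        simp only [hφ', ContinuousMap.sub_apply, ContinuousMap.smul_apply, smul_eq_mul, h1,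
          mul_one]
        linarith
    have := le_add_of_det hμ hF (le_of_lt hε) hφ'F
    linarith [hμφ' ▸ this]
  intro φ ψ hφψ
  have h1 : μ φ ≤ μ ψ := le_of_forall_pos_le_add (fun ε hε => key φ ψ hφψ ε hε)
  have h2 : μ ψ ≤ μ φ := le_of_forall_pos_le_add
    (fun ε hε => key ψ φ (fun x hx => (hφψ x hx).symm) ε hε)
  linarith

theorem det_univ : Det μ Set.univ := fun φ ψ h =>
  congrArg μ (ContinuousMap.ext fun x => h x trivial)

/-- The support of an idempotent probability measure is a determining set. -/
theorem supp_det [NormalSpace X] [CompactSpace X] (hμ : IsIdemProb μ) :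
    Det μ (suppI μ) := by
  have key : ∀ φ ψ : C(X, ℝ), (∀ x ∈ suppI μ, φ x = ψ x) → ∀ ε : ℝ, 0 < ε →
      μ φ ≤ μ ψ + ε := by
    intro φ ψ hφψ ε hε
    set V : Set X := {x | φ x < ψ x + ε} with hV
    have hVo : IsOpen V := isOpen_lt (map_continuous φ) (by continuity)
    have hsuppV : suppI μ ⊆ V := fun x hx => by
      simp only [hV, Set.mem_setOf_eq, hφψ x hx]; linarith
    -- cover Vᶜ by complements of determining closed sets
    have hVc : IsCompact (Vᶜ : Set X) := hVo.isClosed_compl.isCompact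
    have hcov : (Vᶜ : Set X) ⊆ ⋃ i : {F : Set X // IsClosed F ∧ Det μ F}, (i.1)ᶜ := by
      intro x hx
      by_contra hcon
      simp only [Set.mem_iUnion, Set.mem_compl_iff, not_exists, not_not] at hcon
      have : x ∈ suppI μ := by
        intro F hF
        exact hcon ⟨F, hF.1, hF.2⟩
      exact hx (hsuppV this)
    obtain ⟨t, ht⟩ := hVc.elim_finite_subcover _
      (fun i : {F : Set X // IsClosed F ∧ Det μ F} => i.2.1.isOpen_compl) hcov
    set F : Set X := ⋂ i ∈ t, (i : {F : Set X // IsClosed F ∧ Det μ F}).1 with hFdef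
    have hFV : F ⊆ V := by
      intro x hx
      by_contra hxV
      obtain ⟨i, hit, hi⟩ := Set.mem_iUnion₂.mp (ht hxV)
      exact hi (Set.mem_iInter₂.mp hx i hit)
    have hFdet : IsClosed F ∧ Det μ F := by
      classical
      have : ∀ s : Finset {F : Set X // IsClosed F ∧ Det μ F},
          IsClosed (⋂ i ∈ s, (i : {F : Set X // IsClosed F ∧ Det μ F}).1) ∧
          Det μ (⋂ i ∈ s, (i : {F : Set X // IsClosed F ∧ Det μ F}).1) := by
        intro s
        induction s using Finset.induction_on with
        | empty =>
          simp only [Finset.notMem_empty, Set.iInter_of_empty, Set.iInter_univ]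
          exact ⟨isClosed_univ, det_univ⟩
        | insert i s' his ih =>
          rw [Finset.set_biInter_insert]
          exact ⟨i.2.1.inter ih.1, det_inter hμ i.2.1 ih.1 i.2.2 ih.2⟩
      exact this t
    exact le_add_of_det hμ hFdet.2 (le_of_lt hε)
      (fun x hx => le_of_lt (hFV hx))
  intro φ ψ hφψ
  have h1 : μ φ ≤ μ ψ := le_of_forall_pos_le_add (fun ε hε => key φ ψ hφψ ε hε)
  have h2 : μ ψ ≤ μ φ := le_of_forall_pos_le_add
    (fun ε hε => key ψ φ (fun x hx => (hφψ x hx).symm) ε hε)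
  linarith

theorem suppI_isClosed : IsClosed (suppI μ) :=
  isClosed_sInter fun _ hF => hF.1

/-- `S_I(U)` is open for `U` open. -/
theorem SI_isOpen [NormalSpace X] [CompactSpace X] {U : Set X} (hU : IsOpen U) :
    IsOpen (SI (X := X) U) := by
  have heq : SI (X := X) U = ⋃ p : C(X, ℝ) × C(X, ℝ),
      ⋃ _ : Set.EqOn p.1 p.2 Uᶜ, {ν : IPM X | ν.1 p.1 ≠ ν.1 p.2} := by
    ext ν
    simp only [SI, Set.mem_setOf_eq, Set.mem_iUnion]
    constructor
    · rintro ⟨x, hxs, hxU⟩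
      by_contra hcon
      push_neg at hcon
      have : Uᶜ ∈ {F : Set X | IsClosed F ∧ ∀ φ ψ : C(X, ℝ),
          (∀ x ∈ F, φ x = ψ x) → ν.1 φ = ν.1 ψ} :=
        ⟨hU.isClosed_compl, fun φ ψ h => by
          by_contra hne
          exact hne (hcon (φ, ψ) (fun x hx => h x hx))⟩
      exact (hxs _ this) hxU
    · rintro ⟨⟨φ, ψ⟩, hEq, hne⟩
      by_contra hcon
      rw [Set.not_nonempty_iff_eq_empty] at hcon
      have hsub : suppI ν.1 ⊆ Uᶜ := by
        rw [Set.subset_compl_iff_disjoint_right, Set.disjoint_iff_inter_eq_empty]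
        exact hcon
      exact hne (supp_det ν.2 φ ψ (fun x hx => hEq (hsub hx)))
  rw [heq]
  refine isOpen_iUnion fun p => isOpen_iUnion fun _ => ?_
  have h1 : Continuous fun ν : IPM X => ν.1 p.1 :=
    (continuous_apply p.1).comp continuous_subtype_val
  have h2 : Continuous fun ν : IPM X => ν.1 p.2 :=
    (continuous_apply p.2).comp continuous_subtype_val
  exact isOpen_compl_iff.mpr (isClosed_eq h1 h2)

end Aux

theorem SI_closed_Gdelta {X : Type*} [MetricSpace X] [CompactSpace X]
    (A : Set X) (hA : IsClosed A) (f : X → ℝ) (hf : Continuous f) (hAf : A = f ⁻¹' {0}) :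
    SI A = (⋂ n : ℕ, SI (f ⁻¹' Set.Ioo (-(1 / (n + 1) : ℝ)) (1 / (n + 1)))) ∧
    IsGδ (SI A) := by
  have hpos : ∀ n : ℕ, (0 : ℝ) < 1 / (n + 1) := fun n => by positivity
  have heq : SI A = ⋂ n : ℕ, SI (f ⁻¹' Set.Ioo (-(1 / (n + 1) : ℝ)) (1 / (n + 1))) := by
    ext μ
    simp only [Set.mem_iInter, SI, Set.mem_setOf_eq]
    constructor
    · rintro ⟨x, hxs, hxA⟩ n
      refine ⟨x, hxs, ?_⟩
      have hx0 : f x = 0 := by rwa [hAf, Set.mem_preimage, Set.mem_singleton_iff] at hxA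
      simp only [Set.mem_preimage, Set.mem_Ioo, hx0]
      exact ⟨neg_lt_zero.mpr (hpos n), hpos n⟩
    · intro h
      set K : ℕ → Set X := fun n =>
        suppI μ.1 ∩ f ⁻¹' Set.Icc (-(1 / (n + 1) : ℝ)) (1 / (n + 1)) with hK
      have hKcl : ∀ n, IsClosed (K n) :=
        fun n => suppI_isClosed.inter (isClosed_Icc.preimage hf)
      have hKne : ∀ n, (K n).Nonempty := fun n => by
        obtain ⟨x, hxs, hx⟩ := h n
        exact ⟨x, hxs, Set.Ioo_subset_Icc_self hx⟩
      have hKmono : ∀ n, K (n + 1) ⊆ K n := by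
        intro n
        apply Set.inter_subset_inter_right
        apply Set.preimage_mono
        apply Set.Icc_subset_Icc
        · simp only [neg_le_neg_iff]
          apply one_div_le_one_div_of_le
          · positivity
          · push_cast; linarith
        · apply one_div_le_one_div_of_le
          · positivity
          · push_cast; linarith
      obtain ⟨x, hx⟩ := IsCompact.nonempty_iInter_of_sequence_nonempty_isCompact_isClosed
        K hKmono hKne ((hKcl 0).isCompact) hKcl
      simp only [Set.mem_iInter] at hx
      refine ⟨x, (hx 0).1, ?_⟩
      rw [hAf, Set.mem_preimage, Set.mem_singleton_iff]
      have habs : ∀ n : ℕ, |f x| ≤ 1 / (n + 1) := by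
        intro n
        have := (hx n).2
        rw [Set.mem_preimage, Set.mem_Icc] at this
        rw [abs_le]
        exact ⟨this.1, this.2⟩
      have h0 : |f x| ≤ 0 :=
        ge_of_tendsto' tendsto_one_div_add_atTop_nhds_zero_nat habs
      exact abs_eq_zero.mp (le_antisymm h0 (abs_nonneg _))
  refine ⟨heq, ?_⟩
  rw [heq]
  exact IsGδ.iInter fun n =>
    (SI_isOpen ((isOpen_Ioo).preimage hf)).isGδ
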